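/- Let g ∈ Mon(X). The map f sending the linear factorization (x_L, x_1, …, x_k, x_R) of g to the chain x_L < x_L·x_1 < x_L·x_1·x_2 < ⋯ < x_L·x_1⋯x_k in the interval [1,g] is an order isomorphism from Fact(G,g,I) onto the poset of nonempty chains of [1,g] ordered by inclusion; its inverse sends the chain y_0 < y_1 < ⋯ < y_k to the linear factorization (y_0, y_0⁻¹y_1, …, y_{k−1}⁻¹y_k, y_k⁻¹g). -/

import Mathlib

/-- Minimal length of `g` as a word over `X`. -/
noncomputable def wlen {G : Type*} [Group G] (X : Set G) (g : G) : ℕ :=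
  sInf {n | ∃ l : List G, l.length = n ∧ (∀ x ∈ l, x ∈ X) ∧ l.prod = g}

section Aux
variable {G : Type*} [Group G] {X : Set G}

lemma wlen_le {a : G} {l : List G} (hl : ∀ x ∈ l, x ∈ X) (hp : l.prod = a) :
    wlen X a ≤ l.length := Nat.sInf_le ⟨l, rfl, hl, hp⟩

lemma wlen_spec {a : G} (ha : a ∈ Submonoid.closure X) :
    ∃ l : List G, l.length = wlen X a ∧ (∀ x ∈ l, x ∈ X) ∧ l.prod = a := by
  obtain ⟨l, hl, hp⟩ := Submonoid.exists_list_of_mem_closure ha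
  have hne : {n | ∃ l : List G, l.length = n ∧ (∀ x ∈ l, x ∈ X) ∧ l.prod = a}.Nonempty :=
    ⟨l.length, l, rfl, hl, hp⟩
  exact Nat.sInf_mem hne

lemma wlen_one : wlen X (1 : G) = 0 :=
  Nat.le_zero.mp (wlen_le (l := []) (by simp) (by simp))

lemma X_mem_closure {l : List G} (hl : ∀ x ∈ l, x ∈ X) : l.prod ∈ Submonoid.closure X :=
  Submonoid.list_prod_mem _ (fun x hx => Submonoid.subset_closure (hl x hx))

lemma wlen_mul_le {a b : G} (ha : a ∈ Submonoid.closure X) (hb : b ∈ Submonoid.closure X) :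
    wlen X (a * b) ≤ wlen X a + wlen X b := by
  obtain ⟨l, hl, hlm, hlp⟩ := wlen_spec ha
  obtain ⟨m, hm, hmm, hmp⟩ := wlen_spec hb
  calc wlen X (a * b) ≤ (l ++ m).length := by
        refine wlen_le (fun x hx => ?_) (by simp [hlp, hmp])
        rcases List.mem_append.mp hx with h | h
        · exact hlm x h
        · exact hmm x h
    _ = wlen X a + wlen X b := by simp [hl, hm]

lemma eq_one_of_wlen_eq_zero {a : G} (ha : a ∈ Submonoid.closure X) (h : wlen X a = 0) :
    a = 1 := by
  obtain ⟨l, hl, _, hlp⟩ := wlen_spec ha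
  rw [h, List.length_eq_zero_iff] at hl
  simp [hl] at hlp; exact hlp.symm

lemma wlen_prod_le {L : List G} (hL : ∀ x ∈ L, x ∈ Submonoid.closure X) :
    wlen X L.prod ≤ (L.map (wlen X)).sum := by
  induction L with
  | nil => simp [wlen_one]
  | cons a t ih =>
    simp only [List.prod_cons, List.map_cons, List.sum_cons]
    calc wlen X (a * t.prod) ≤ wlen X a + wlen X t.prod :=
          wlen_mul_le (hL a (by simp)) (Submonoid.list_prod_mem _ (fun x hx => hL x (by simp [hx])))
      _ ≤ wlen X a + (t.map (wlen X)).sum := by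
          have := ih (fun x hx => hL x (by simp [hx])); omega

end Aux

/-- `h` lies in the interval `[1,g]` for the prefix order determined by `X`. -/
def intLe {G : Type*} [Group G] (X : Set G) (h g : G) : Prop :=
  h ∈ Submonoid.closure X ∧ h⁻¹ * g ∈ Submonoid.closure X ∧
    wlen X h + wlen X (h⁻¹ * g) = wlen X g

section Aux2
variable {G : Type*} [Group G] {X : Set G}

lemma intLe_refl {a : G} (ha : a ∈ Submonoid.closure X) : intLe X a a :=
  ⟨ha, by simp [Submonoid.one_mem], by simp [wlen_one]⟩

lemma intLe_trans {a b c : G} (hab : intLe X a b) (hbc : intLe X b c) : intLe X a c := by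
  obtain ⟨ha, hab', eab⟩ := hab
  obtain ⟨hb, hbc', ebc⟩ := hbc
  have hmem : a⁻¹ * c ∈ Submonoid.closure X := by
    have := Submonoid.mul_mem _ hab' hbc'
    simpa [mul_assoc] using this
  refine ⟨ha, hmem, le_antisymm ?_ ?_⟩
  · have h1 : wlen X (a⁻¹ * c) ≤ wlen X (a⁻¹ * b) + wlen X (b⁻¹ * c) := by
      have := wlen_mul_le hab' hbc'
      simpa [mul_assoc] using this
    omega
  · have h2 : wlen X c ≤ wlen X a + wlen X (a⁻¹ * c) := by
      have := wlen_mul_le ha hmem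
      simpa [mul_assoc] using this
    omega

lemma intLe_antisymm {a b : G} (hab : intLe X a b) (hba : intLe X b a) : a = b := by
  obtain ⟨ha, hab', eab⟩ := hab
  obtain ⟨hb, hba', eba⟩ := hba
  have h0 : wlen X (a⁻¹ * b) = 0 := by omega
  have := eq_one_of_wlen_eq_zero hab' h0
  have : a * (a⁻¹ * b) = a * 1 := by rw [this]
  simpa [mul_assoc] using this.symm

lemma intLe_wlen_lt {a b : G} (hab : intLe X a b) (hne : a ≠ b) : wlen X a < wlen X b := by
  obtain ⟨ha, hab', eab⟩ := hab
  rcases Nat.eq_zero_or_pos (wlen X (a⁻¹ * b)) with h | h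
  · exact absurd (by
      have h1 := eq_one_of_wlen_eq_zero hab' h
      have : a * (a⁻¹ * b) = a * 1 := by rw [h1]
      simpa [mul_assoc] using this.symm) hne
  · omega

-- additivity of prefix/suffix lengths
lemma addtv_take_drop {L : List G} (hmem : ∀ x ∈ L, x ∈ Submonoid.closure X)
    (hadd : (L.map (wlen X)).sum = wlen X L.prod) (i : ℕ) :
    wlen X (L.take i).prod = ((L.take i).map (wlen X)).sum ∧
    wlen X (L.drop i).prod = ((L.drop i).map (wlen X)).sum := by
  have hmt : ∀ x ∈ L.take i, x ∈ Submonoid.closure X := fun x hx => hmem x (List.mem_of_mem_take hx)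
  have hmd : ∀ x ∈ L.drop i, x ∈ Submonoid.closure X := fun x hx => hmem x (List.mem_of_mem_drop hx)
  have h1 := wlen_prod_le (X := X) hmt
  have h2 := wlen_prod_le (X := X) hmd
  have h3 : wlen X L.prod ≤ wlen X (L.take i).prod + wlen X (L.drop i).prod := by
    have := wlen_mul_le (Submonoid.list_prod_mem _ hmt) (Submonoid.list_prod_mem _ hmd)
    simpa [List.take_append_drop] using this
  have h4 : ((L.take i).map (wlen X)).sum + ((L.drop i).map (wlen X)).sum
      = (L.map (wlen X)).sum := by
    rw [← List.sum_append, ← List.map_append, List.take_append_drop]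
  omega

lemma addtv_intLe {L : List G} (hmem : ∀ x ∈ L, x ∈ Submonoid.closure X)
    (hadd : (L.map (wlen X)).sum = wlen X L.prod) (i : ℕ) :
    intLe X (L.take i).prod L.prod := by
  have hmt : ∀ x ∈ L.take i, x ∈ Submonoid.closure X := fun x hx => hmem x (List.mem_of_mem_take hx)
  have hmd : ∀ x ∈ L.drop i, x ∈ Submonoid.closure X := fun x hx => hmem x (List.mem_of_mem_drop hx)
  obtain ⟨e1, e2⟩ := addtv_take_drop hmem hadd i
  have hdrop : ((L.take i).prod)⁻¹ * L.prod = (L.drop i).prod := by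
    have hsplit : L.prod = (L.take i).prod * (L.drop i).prod := by
      rw [← List.prod_append, List.take_append_drop]
    rw [hsplit, inv_mul_cancel_left]
  refine ⟨Submonoid.list_prod_mem _ hmt, ?_, ?_⟩
  · rw [hdrop]; exact Submonoid.list_prod_mem _ hmd
  · rw [hdrop, e1, e2]
    rw [← hadd, ← List.sum_append, ← List.map_append, List.take_append_drop]

lemma addtv_take {L : List G} (hmem : ∀ x ∈ L, x ∈ Submonoid.closure X)
    (hadd : (L.map (wlen X)).sum = wlen X L.prod) (i : ℕ) :
    ((L.take i).map (wlen X)).sum = wlen X (L.take i).prod :=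
  ((addtv_take_drop hmem hadd i).1).symm

lemma addtv_drop {L : List G} (hmem : ∀ x ∈ L, x ∈ Submonoid.closure X)
    (hadd : (L.map (wlen X)).sum = wlen X L.prod) (i : ℕ) :
    ((L.drop i).map (wlen X)).sum = wlen X (L.drop i).prod :=
  ((addtv_take_drop hmem hadd i).2).symm

lemma addtv_intLe_take {L : List G} (hmem : ∀ x ∈ L, x ∈ Submonoid.closure X)
    (hadd : (L.map (wlen X)).sum = wlen X L.prod) {i j : ℕ} (hij : i ≤ j) :
    intLe X (L.take i).prod (L.take j).prod := by
  have hmt : ∀ x ∈ L.take j, x ∈ Submonoid.closure X := fun x hx => hmem x (List.mem_of_mem_take hx)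
  have := addtv_intLe hmt (addtv_take hmem hadd j) i
  rwa [List.take_take, min_eq_left hij] at this

end Aux2

/-- A linear factorization `(x_L, x₁, …, x_k, x_R)` of `g`, encoded as a triple
`(x_L, [x₁, …, x_k], x_R)`: all entries in `Mon(X)`, middle entries nontrivial,
the product is `g` and the lengths add up to `ℓ(g)`. -/
def IsLinFact {G : Type*} [Group G] (X : Set G) (g : G) (p : G × List G × G) : Prop :=
  p.1 ∈ Submonoid.closure X ∧ p.2.2 ∈ Submonoid.closure X ∧
    (∀ a ∈ p.2.1, a ∈ Submonoid.closure X ∧ a ≠ 1) ∧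
    p.1 * p.2.1.prod * p.2.2 = g ∧
    wlen X p.1 + (p.2.1.map (wlen X)).sum + wlen X p.2.2 = wlen X g

/-- A single merge of two consecutive entries of a linear factorization. -/
inductive MergeStep {G : Type*} [Group G] : G × List G × G → G × List G × G → Prop
  | left (xL a : G) (l : List G) (xR : G) :
      MergeStep (xL * a, l, xR) (xL, a :: l, xR)
  | mid (xL : G) (l₁ : List G) (a b : G) (l₂ : List G) (xR : G) :
      MergeStep (xL, l₁ ++ (a * b) :: l₂, xR) (xL, l₁ ++ a :: b :: l₂, xR)
  | right (xL : G) (l : List G) (a xR : G) :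
      MergeStep (xL, l, a * xR) (xL, l ++ [a], xR)

/-- The partial order on linear factorizations: `p ≤ q` iff `p` is obtained from `q`
by a (possibly empty) sequence of merges. -/
def FactLE {G : Type*} [Group G] : G × List G × G → G × List G × G → Prop :=
  Relation.ReflTransGen MergeStep

/-- The map `f` sending a linear factorization `(x_L, x₁, …, x_k, x_R)` to the chain
`{x_L, x_L x₁, x_L x₁ x₂, …, x_L x₁ ⋯ x_k}` of prefix products. -/
noncomputable def chainOf {G : Type*} [Group G] (p : G × List G × G) : Finset G :=
  letI := Classical.decEq G
  ((List.range (p.2.1.length + 1)).map (fun i => p.1 * (p.2.1.take i).prod)).toFinset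

set_option linter.unusedSectionVars false

section Aux3
variable {G : Type*} [Group G] {X : Set G} {g : G}

lemma mem_chainOf {p : G × List G × G} {h : G} :
    h ∈ chainOf p ↔ ∃ i, i ≤ p.2.1.length ∧ h = p.1 * (p.2.1.take i).prod := by
  classical
  simp only [chainOf, List.mem_toFinset, List.mem_map, List.mem_range, Nat.lt_succ_iff]
  constructor
  · rintro ⟨i, hi, rfl⟩; exact ⟨i, hi, rfl⟩
  · rintro ⟨i, hi, rfl⟩; exact ⟨i, hi, rfl⟩

lemma mem_chainOf_self {p : G × List G × G} : p.1 ∈ chainOf p :=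
  mem_chainOf.mpr ⟨0, Nat.zero_le _, by simp⟩

namespace LinFactAux

variable {xL xR : G} {l : List G}

lemma lp_mem (hL : xL ∈ Submonoid.closure X) (hR : xR ∈ Submonoid.closure X)
    (hm : ∀ a ∈ l, a ∈ Submonoid.closure X ∧ a ≠ 1) :
    ∀ x ∈ xL :: l ++ [xR], x ∈ Submonoid.closure X := by
  intro x hx
  simp only [List.mem_cons, List.mem_append, List.mem_singleton] at hx
  rcases hx with (rfl | hx) | (rfl | h)
  · exact hL
  · exact (hm x hx).1
  · exact hR
  · simp at h

lemma lp_prod (hprod : xL * l.prod * xR = g) : (xL :: l ++ [xR]).prod = g := by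
  simp [List.prod_append, ← mul_assoc, hprod]

lemma lp_sum (hsum : wlen X xL + (l.map (wlen X)).sum + wlen X xR = wlen X g) :
    ((xL :: l ++ [xR]).map (wlen X)).sum = wlen X g := by
  simp only [List.cons_append, List.map_cons, List.map_append, List.sum_cons, List.sum_append,
    List.map_cons, List.map_nil, List.sum_cons, List.sum_nil]
  omega

lemma lp_take {i : ℕ} (hi : i ≤ l.length) :
    (xL :: l ++ [xR]).take (i + 1) = xL :: l.take i := by
  simp only [List.cons_append, List.take_succ_cons, List.take_append_of_le_length hi]

variable (hL : xL ∈ Submonoid.closure X) (hR : xR ∈ Submonoid.closure X)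
    (hm : ∀ a ∈ l, a ∈ Submonoid.closure X ∧ a ≠ 1)
    (hprod : xL * l.prod * xR = g)
    (hsum : wlen X xL + (l.map (wlen X)).sum + wlen X xR = wlen X g)

include hL hR hm hprod hsum

lemma z_le_g {i : ℕ} (hi : i ≤ l.length) : intLe X (xL * (l.take i).prod) g := by
  have := addtv_intLe (lp_mem hL hR hm) (X := X)
    (by rw [lp_sum hsum, lp_prod hprod]) (i + 1)
  rwa [lp_take hi, lp_prod hprod, List.prod_cons] at this

lemma z_le_z {i j : ℕ} (hij : i ≤ j) (hj : j ≤ l.length) :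
    intLe X (xL * (l.take i).prod) (xL * (l.take j).prod) := by
  have := addtv_intLe_take (lp_mem hL hR hm) (X := X)
    (by rw [lp_sum hsum, lp_prod hprod]) (Nat.succ_le_succ hij)
  rwa [lp_take hj, lp_take (le_trans hij hj), List.prod_cons, List.prod_cons] at this

lemma z_wlen_eq {i : ℕ} (hi : i ≤ l.length) :
    wlen X (xL * (l.take i).prod) = ((xL :: l.take i).map (wlen X)).sum := by
  have := addtv_take (lp_mem hL hR hm) (X := X)
    (by rw [lp_sum hsum, lp_prod hprod]) (i + 1)
  rw [lp_take hi, List.prod_cons] at this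
  exact this.symm

lemma z_lt_z {i j : ℕ} (hij : i < j) (hj : j ≤ l.length) :
    wlen X (xL * (l.take i).prod) < wlen X (xL * (l.take j).prod) := by
  rw [z_wlen_eq hL hR hm hprod hsum (le_of_lt (lt_of_lt_of_le hij hj)),
    z_wlen_eq hL hR hm hprod hsum hj]
  have hsplit : l.take j = l.take i ++ (l.take j).drop i := by
    have h1 : (l.take j).take i = l.take i := by
      rw [List.take_take, min_eq_left (le_of_lt hij)]
    rw [← h1, List.take_append_drop]
  rw [hsplit]
  simp only [List.map_cons, List.map_append, List.sum_cons, List.sum_append]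
  have hlen : 0 < ((l.take j).drop i).length := by
    rw [List.length_drop, List.length_take]; omega
  obtain ⟨a, ha⟩ := List.exists_mem_of_length_pos hlen
  have hal : a ∈ l := List.mem_of_mem_take (List.mem_of_mem_drop ha)
  have hw : 1 ≤ wlen X a := by
    rcases Nat.eq_zero_or_pos (wlen X a) with h | h
    · exact absurd (eq_one_of_wlen_eq_zero (hm a hal).1 h) (hm a hal).2
    · exact h
  have hsum' : wlen X a ≤ (((l.take j).drop i).map (wlen X)).sum :=
    List.single_le_sum (by simp) _ (List.mem_map_of_mem ha)
  omega

end LinFactAux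
end Aux3

section Aux4
variable {G : Type*} [Group G] {X : Set G} {g : G}

lemma take_succ_prod {l : List G} {i : ℕ} (h : i < l.length) :
    (l.take (i+1)).prod = (l.take i).prod * l[i] := by
  rw [List.take_succ, List.getElem?_eq_getElem h]
  rw [Option.toList_some, List.prod_append, List.prod_cons, List.prod_nil, mul_one]

namespace TupleAux

variable {k : ℕ} {y : Fin (k+1) → G}

/-- the middle list of the inverse factorization -/
abbrev mid (y : Fin (k+1) → G) : List G :=
  List.ofFn (fun i : Fin k => (y i.castSucc)⁻¹ * y i.succ)

lemma mid_length : (mid y).length = k := List.length_ofFn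

lemma tel : ∀ i : ℕ, (hi : i ≤ k) → y 0 * ((mid y).take i).prod = y ⟨i, Nat.lt_succ_of_le hi⟩ := by
  intro i
  induction i with
  | zero => intro _; simp
  | succ i ih =>
    intro hi
    have hi' : i ≤ k := Nat.le_of_succ_le hi
    have hlen : i < (mid y).length := by rw [mid_length]; omega
    rw [take_succ_prod hlen, ← mul_assoc, ih hi', List.getElem_ofFn]
    have h1 : (⟨i, by omega⟩ : Fin k).castSucc = ⟨i, Nat.lt_succ_of_le hi'⟩ := rfl
    have h2 : (⟨i, by omega⟩ : Fin k).succ = ⟨i + 1, Nat.lt_succ_of_le hi⟩ := rfl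
    rw [h1, h2, mul_inv_cancel_left]

lemma telw (hy : ∀ i j : Fin (k+1), i < j → intLe X (y i) (y j) ∧ y i ≠ y j) :
    ∀ i : ℕ, (hi : i ≤ k) →
      wlen X (y 0) + (((mid y).take i).map (wlen X)).sum = wlen X (y ⟨i, Nat.lt_succ_of_le hi⟩) := by
  intro i
  induction i with
  | zero => intro _; simp
  | succ i ih =>
    intro hi
    have hi' : i ≤ k := Nat.le_of_succ_le hi
    have hlen : i < (mid y).length := by rw [mid_length]; omega
    have hlt : (⟨i, Nat.lt_succ_of_le hi'⟩ : Fin (k+1)) < ⟨i + 1, Nat.lt_succ_of_le hi⟩ := by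
      simp [Fin.lt_def]
    obtain ⟨⟨_, hcl, hadd⟩, _⟩ := hy _ _ hlt
    rw [List.take_succ, List.getElem?_eq_getElem hlen]
    simp only [List.map_append, List.sum_append, Option.toList_some, List.map_cons,
      List.map_nil, List.sum_cons, List.sum_nil]
    rw [← Nat.add_assoc, ih hi', List.getElem_ofFn]
    have h1 : (⟨i, by omega⟩ : Fin k).castSucc = ⟨i, Nat.lt_succ_of_le hi'⟩ := rfl
    have h2 : (⟨i, by omega⟩ : Fin k).succ = ⟨i + 1, Nat.lt_succ_of_le hi⟩ := rfl
    rw [h1, h2]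
    omega

lemma inv_isLinFact (hy : ∀ i j : Fin (k+1), i < j → intLe X (y i) (y j) ∧ y i ≠ y j)
    (hyg : ∀ i, intLe X (y i) g) :
    IsLinFact X g (y 0, mid y, (y (Fin.last k))⁻¹ * g) := by
  have h0 : y 0 ∈ Submonoid.closure X := (hyg 0).1
  have hlast := hyg (Fin.last k)
  have hmtk : (mid y).take k = mid y := List.take_of_length_le (by rw [mid_length])
  have htel : y 0 * (mid y).prod = y (Fin.last k) := by
    have h := tel (y := y) k le_rfl
    rw [hmtk] at h
    rw [h]; rfl
  refine ⟨h0, hlast.2.1, ?_, ?_, ?_⟩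
  · intro a ha
    rw [List.mem_ofFn] at ha
    obtain ⟨i, rfl⟩ := ha
    have hlt : i.castSucc < i.succ := Fin.castSucc_lt_succ
    obtain ⟨⟨_, hcl, _⟩, hne⟩ := hy _ _ hlt
    refine ⟨hcl, fun h1 => hne ?_⟩
    have h1' : (y i.castSucc)⁻¹ * y i.succ = 1 := h1
    have : y i.castSucc * ((y i.castSucc)⁻¹ * y i.succ) = y i.castSucc * 1 := by rw [h1']
    simpa [mul_assoc] using this.symm
  · rw [htel, mul_inv_cancel_left]
  · have hw := telw (X := X) hy k le_rfl
    rw [hmtk] at hw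
    have hlastw := hlast.2.2
    have hke : (⟨k, Nat.lt_succ_of_le le_rfl⟩ : Fin (k+1)) = Fin.last k := rfl
    rw [hke] at hw
    show wlen X (y 0) + ((mid y).map (wlen X)).sum + wlen X ((y (Fin.last k))⁻¹ * g) = wlen X g
    omega

lemma inv_chain (hy : ∀ i j : Fin (k+1), i < j → intLe X (y i) (y j) ∧ y i ≠ y j) :
    (chainOf (y 0, mid y, (y (Fin.last k))⁻¹ * g) : Set G) = Set.range y := by
  ext h
  simp only [Finset.mem_coe, mem_chainOf, Set.mem_range]
  constructor
  · rintro ⟨i, hi, rfl⟩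
    rw [mid_length] at hi
    exact ⟨⟨i, Nat.lt_succ_of_le hi⟩, (tel i hi).symm⟩
  · rintro ⟨i, rfl⟩
    refine ⟨i, by rw [mid_length]; omega, ?_⟩
    have := tel (y := y) i (by omega)
    have hieq : (⟨(i : ℕ), Nat.lt_succ_of_le (by omega)⟩ : Fin (k+1)) = i := by
      apply Fin.ext; rfl
    rw [hieq] at this
    exact this.symm

end TupleAux
end Aux4

section Aux5
variable {G : Type*} [Group G] {X : Set G} {g : G}

open LinFactAux in
lemma linfact_tuple_strict {xL xR : G} {l : List G} (hq : IsLinFact X g (xL, l, xR)) :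
    ∀ i j : Fin (l.length + 1), i < j →
      intLe X (xL * (l.take (i : ℕ)).prod) (xL * (l.take (j : ℕ)).prod) ∧
        xL * (l.take (i : ℕ)).prod ≠ xL * (l.take (j : ℕ)).prod := by
  obtain ⟨hL, hR, hm, hprod, hsum⟩ := hq
  simp only at hL hR hm hprod hsum
  intro i j hij
  have hij' : (i : ℕ) < (j : ℕ) := hij
  have hj : (j : ℕ) ≤ l.length := Nat.lt_succ_iff.mp j.isLt
  refine ⟨z_le_z hL hR hm hprod hsum (le_of_lt hij') hj, fun he => ?_⟩
  have := z_lt_z hL hR hm hprod hsum hij' hj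
  rw [he] at this
  omega

open LinFactAux in
lemma linfact_tuple_le_g {xL xR : G} {l : List G} (hq : IsLinFact X g (xL, l, xR)) :
    ∀ i : Fin (l.length + 1), intLe X (xL * (l.take (i : ℕ)).prod) g := by
  obtain ⟨hL, hR, hm, hprod, hsum⟩ := hq
  simp only at hL hR hm hprod hsum
  intro i
  exact z_le_g hL hR hm hprod hsum (Nat.lt_succ_iff.mp i.isLt)

lemma linfact_chain_eq_range {xL xR : G} {l : List G} :
    (chainOf (xL, l, xR) : Set G) =
      Set.range (fun i : Fin (l.length + 1) => xL * (l.take (i : ℕ)).prod) := by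
  ext h
  simp only [Finset.mem_coe, mem_chainOf, Set.mem_range]
  constructor
  · rintro ⟨i, hi, rfl⟩
    exact ⟨⟨i, Nat.lt_succ_of_le hi⟩, rfl⟩
  · rintro ⟨i, rfl⟩
    exact ⟨(i : ℕ), Nat.lt_succ_iff.mp i.isLt, rfl⟩

lemma chain_tuples_eq {m n : ℕ} {y : Fin (m+1) → G} {z : Fin (n+1) → G}
    (hy : ∀ i j, i < j → intLe X (y i) (y j) ∧ y i ≠ y j)
    (hz : ∀ i j, i < j → intLe X (z i) (z j) ∧ z i ≠ z j)
    (hr : Set.range y = Set.range z) :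
    m = n ∧ ∀ (i : ℕ) (hi : i < m+1) (hi' : i < n+1), y ⟨i, hi⟩ = z ⟨i, hi'⟩ := by
  classical
  have hNy : StrictMono (wlen X ∘ y) := fun i j hij =>
    intLe_wlen_lt (hy i j hij).1 (hy i j hij).2
  have hNz : StrictMono (wlen X ∘ z) := fun i j hij =>
    intLe_wlen_lt (hz i j hij).1 (hz i j hij).2
  have hiy : Function.Injective y := Function.Injective.of_comp hNy.injective
  have hiz : Function.Injective z := Function.Injective.of_comp hNz.injective
  have hmn : m = n := by
    have h1 : (Finset.univ.image y).card = m + 1 := by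
      rw [Finset.card_image_of_injective _ hiy, Finset.card_univ, Fintype.card_fin]
    have h2 : (Finset.univ.image z).card = n + 1 := by
      rw [Finset.card_image_of_injective _ hiz, Finset.card_univ, Fintype.card_fin]
    have h3 : (Finset.univ.image y) = (Finset.univ.image z) := by
      apply Finset.coe_injective
      simp [hr]
    rw [h3, h2] at h1
    omega
  subst hmn
  have hfe : (wlen X ∘ y) = (wlen X ∘ z) :=
    (StrictMono.range_inj hNy hNz).mp (by rw [Set.range_comp, Set.range_comp, hr])
  refine ⟨rfl, fun i hi hi' => ?_⟩
  have hmem : y ⟨i, hi⟩ ∈ Set.range z := by rw [← hr]; exact ⟨_, rfl⟩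
  obtain ⟨j, hj⟩ := hmem
  have hwe : (wlen X ∘ z) j = (wlen X ∘ z) ⟨i, hi'⟩ := by
    have := congrFun hfe (⟨i, hi⟩ : Fin (m+1))
    simp only [Function.comp_apply] at this ⊢
    rw [hj, this]
  have := hNz.injective hwe
  rw [← hj, this]

lemma chainOf_inj {p q : G × List G × G} (hp : IsLinFact X g p) (hq : IsLinFact X g q)
    (h : chainOf p = chainOf q) : p = q := by
  obtain ⟨xL₁, l₁, xR₁⟩ := p
  obtain ⟨xL₂, l₂, xR₂⟩ := q
  have hr : Set.range (fun i : Fin (l₁.length + 1) => xL₁ * (l₁.take (i : ℕ)).prod) =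
      Set.range (fun i : Fin (l₂.length + 1) => xL₂ * (l₂.take (i : ℕ)).prod) := by
    rw [← linfact_chain_eq_range, ← linfact_chain_eq_range, h]
  obtain ⟨hlen, heq⟩ := chain_tuples_eq (linfact_tuple_strict hp) (linfact_tuple_strict hq) hr
  have heq' : ∀ i : ℕ, i ≤ l₁.length → xL₁ * (l₁.take i).prod = xL₂ * (l₂.take i).prod := by
    intro i hi
    exact heq i (by omega) (by omega)
  have hxL : xL₁ = xL₂ := by
    have := heq' 0 (Nat.zero_le _)
    simpa using this
  have hl : l₁ = l₂ := by
    refine List.ext_getElem hlen (fun i h₁ h₂ => ?_)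
    have e1 := heq' i (le_of_lt h₁)
    have e2 := heq' (i+1) h₁
    rw [take_succ_prod h₁, take_succ_prod h₂] at e2
    rw [← mul_assoc, ← mul_assoc] at e2
    have e2' : (xL₁ * (l₁.take i).prod) * l₁[i] = (xL₁ * (l₁.take i).prod) * l₂[i] := by
      rw [e2, e1]
    exact mul_left_cancel e2'
  subst hxL; subst hl
  have hxR : xR₁ = xR₂ := by
    have e1 := hp.2.2.2.1
    have e2 := hq.2.2.2.1
    simp only at e1 e2
    rw [← e2] at e1
    exact mul_left_cancel e1
  rw [hxR]

end Aux5

section Aux6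
variable {G : Type*} [Group G] {X : Set G} {g : G}

lemma wlen_pos_of_ne_one {a : G} (ha : a ∈ Submonoid.closure X) (hne : a ≠ 1) :
    1 ≤ wlen X a := by
  rcases Nat.eq_zero_or_pos (wlen X a) with h | h
  · exact absurd (eq_one_of_wlen_eq_zero ha h) hne
  · exact h

lemma linfact_merge_left {xL a : G} {t : List G} {xR : G}
    (h : IsLinFact X g (xL, a :: t, xR)) : IsLinFact X g (xL * a, t, xR) := by
  obtain ⟨hL, hR, hm, hprod, hsum⟩ := h
  simp only at hL hR hm hprod hsum
  have ham := hm a List.mem_cons_self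
  have hmem := LinFactAux.lp_mem (X := X) hL hR hm
  have hadd : ((xL :: (a :: t) ++ [xR]).map (wlen X)).sum
      = wlen X (xL :: (a :: t) ++ [xR]).prod := by
    rw [LinFactAux.lp_sum hsum, LinFactAux.lp_prod hprod]
  have h2 := addtv_take hmem hadd 2
  have htake2 : (xL :: (a :: t) ++ [xR]).take 2 = [xL, a] := by simp
  rw [htake2] at h2
  simp only [List.map_cons, List.map_nil, List.sum_cons, List.sum_nil, List.prod_cons,
    List.prod_nil, mul_one, Nat.add_zero] at h2
  refine ⟨Submonoid.mul_mem _ hL ham.1, hR, fun x hx => hm x (List.mem_cons_of_mem _ hx), ?_, ?_⟩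
  · show xL * a * t.prod * xR = g
    simp only [List.prod_cons] at hprod
    rw [mul_assoc xL a t.prod]; exact hprod
  · show wlen X (xL * a) + (t.map (wlen X)).sum + wlen X xR = wlen X g
    simp only [List.map_cons, List.sum_cons] at hsum
    omega

lemma linfact_merge_right {xL : G} {t : List G} {a xR : G}
    (h : IsLinFact X g (xL, t ++ [a], xR)) : IsLinFact X g (xL, t, a * xR) := by
  obtain ⟨hL, hR, hm, hprod, hsum⟩ := h
  simp only at hL hR hm hprod hsum
  have ham := hm a (by simp)
  have hmem := LinFactAux.lp_mem (X := X) hL hR hm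
  have hadd : ((xL :: (t ++ [a]) ++ [xR]).map (wlen X)).sum
      = wlen X (xL :: (t ++ [a]) ++ [xR]).prod := by
    rw [LinFactAux.lp_sum hsum, LinFactAux.lp_prod hprod]
  have h2 := addtv_drop hmem hadd (t.length + 1)
  have hdrop : (xL :: (t ++ [a]) ++ [xR]).drop (t.length + 1) = [a, xR] := by
    rw [List.cons_append, List.drop_succ_cons, List.append_assoc, List.drop_left]
    rfl
  rw [hdrop] at h2
  simp only [List.map_cons, List.map_nil, List.sum_cons, List.sum_nil, List.prod_cons,
    List.prod_nil, mul_one, Nat.add_zero] at h2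
  refine ⟨hL, Submonoid.mul_mem _ ham.1 hR, fun x hx => hm x (by simp [hx]), ?_, ?_⟩
  · show xL * t.prod * (a * xR) = g
    simp only [List.prod_append, List.prod_cons, List.prod_nil, mul_one] at hprod
    rw [← hprod]; simp [mul_assoc]
  · show wlen X xL + (t.map (wlen X)).sum + wlen X (a * xR) = wlen X g
    simp only [List.map_append, List.sum_append, List.map_cons, List.sum_cons,
      List.map_nil, List.sum_nil] at hsum
    omega

lemma linfact_merge_mid {xL A B : G} {L1 L2 : List G} {xR : G}
    (h : IsLinFact X g (xL, L1 ++ A :: B :: L2, xR)) :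
    IsLinFact X g (xL, L1 ++ (A * B) :: L2, xR) := by
  obtain ⟨hL, hR, hm, hprod, hsum⟩ := h
  simp only at hL hR hm hprod hsum
  have hA := hm A (by simp)
  have hB := hm B (by simp)
  have hmem := LinFactAux.lp_mem (X := X) hL hR hm
  have hadd : ((xL :: (L1 ++ A :: B :: L2) ++ [xR]).map (wlen X)).sum
      = wlen X (xL :: (L1 ++ A :: B :: L2) ++ [xR]).prod := by
    rw [LinFactAux.lp_sum hsum, LinFactAux.lp_prod hprod]
  have hdrop : (xL :: (L1 ++ A :: B :: L2) ++ [xR]).drop (L1.length + 1)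
      = A :: B :: (L2 ++ [xR]) := by
    rw [List.cons_append, List.drop_succ_cons, List.append_assoc, List.drop_left]
    rfl
  have h2 := addtv_drop hmem hadd (L1.length + 1)
  rw [hdrop] at h2
  have hmem' : ∀ x ∈ A :: B :: (L2 ++ [xR]), x ∈ Submonoid.closure X := by
    intro x hx
    apply hmem
    rw [← hdrop] at hx
    exact List.mem_of_mem_drop hx
  have h3 := addtv_take hmem' h2 2
  have htake2 : (A :: B :: (L2 ++ [xR])).take 2 = [A, B] := by simp
  rw [htake2] at h3
  simp only [List.map_cons, List.map_nil, List.sum_cons, List.sum_nil, List.prod_cons,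
    List.prod_nil, mul_one, Nat.add_zero] at h3
  -- h3 : wlen X A + wlen X B = wlen X (A * B)
  have hABne : A * B ≠ 1 := by
    intro hab
    have h0 : wlen X (A * B) = 0 := by rw [hab, wlen_one]
    have := wlen_pos_of_ne_one hA.1 hA.2
    omega
  refine ⟨hL, hR, ?_, ?_, ?_⟩
  · intro x hx
    simp only [List.mem_append, List.mem_cons] at hx
    rcases hx with hx | rfl | hx
    · exact hm x (by simp [hx])
    · exact ⟨Submonoid.mul_mem _ hA.1 hB.1, hABne⟩
    · exact hm x (by simp [hx])
  · show xL * (L1 ++ (A * B) :: L2).prod * xR = g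
    simp only [List.prod_append, List.prod_cons] at hprod ⊢
    rw [← hprod]; simp [mul_assoc]
  · show wlen X xL + ((L1 ++ (A * B) :: L2).map (wlen X)).sum + wlen X xR = wlen X g
    simp only [List.map_append, List.sum_append, List.map_cons, List.sum_cons] at hsum ⊢
    omega

lemma take_prod_append_cons {l₁ l₂ : List G} {a : G} (r : ℕ) :
    ((l₁ ++ a :: l₂).take (l₁.length + 1 + r)).prod = l₁.prod * a * (l₂.take r).prod := by
  rw [List.take_append, List.take_of_length_le (by omega), List.prod_append]
  have hr : l₁.length + 1 + r - l₁.length = r + 1 := by omega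
  rw [hr, List.take_succ_cons, List.prod_cons, ← mul_assoc]

lemma mergeStep_chain_subset {p q : G × List G × G} (h : MergeStep p q) :
    ∀ x ∈ chainOf p, x ∈ chainOf q := by
  intro x hx
  obtain ⟨i, hi, hxe⟩ := mem_chainOf.mp hx
  cases h with
  | left xL a l xR =>
    simp only at hi hxe
    refine mem_chainOf.mpr ⟨i + 1, ?_, ?_⟩
    · show i + 1 ≤ (a :: l).length
      simp only [List.length_cons]; omega
    · show x = xL * ((a :: l).take (i + 1)).prod
      rw [hxe, List.take_succ_cons, List.prod_cons, ← mul_assoc]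
  | mid xL l₁ a b l₂ xR =>
    simp only [List.length_append, List.length_cons] at hi
    simp only at hxe
    by_cases hc : i ≤ l₁.length
    · refine mem_chainOf.mpr ⟨i, ?_, ?_⟩
      · show i ≤ (l₁ ++ a :: b :: l₂).length
        simp only [List.length_append, List.length_cons]; omega
      · show x = xL * ((l₁ ++ a :: b :: l₂).take i).prod
        rw [hxe, List.take_append_of_le_length hc, List.take_append_of_le_length hc]
    · have hr : i = l₁.length + 1 + (i - l₁.length - 1) := by omega
      set r := i - l₁.length - 1 with hrdef
      refine mem_chainOf.mpr ⟨i + 1, ?_, ?_⟩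
      · show i + 1 ≤ (l₁ ++ a :: b :: l₂).length
        simp only [List.length_append, List.length_cons]; omega
      · show x = xL * ((l₁ ++ a :: b :: l₂).take (i + 1)).prod
        rw [hxe, hr, take_prod_append_cons,
          show l₁.length + 1 + r + 1 = l₁.length + 1 + (r + 1) from by omega,
          take_prod_append_cons, List.take_succ_cons, List.prod_cons]
        simp [mul_assoc]
  | right xL l a xR =>
    simp only at hi hxe
    refine mem_chainOf.mpr ⟨i, ?_, ?_⟩
    · show i ≤ (l ++ [a]).length
      simp only [List.length_append, List.length_cons]; omega
    · show x = xL * ((l ++ [a]).take i).prod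
      rw [hxe, List.take_append_of_le_length hi]

lemma factLE_chain_subset {p q : G × List G × G} (h : FactLE p q) :
    ∀ x ∈ chainOf p, x ∈ chainOf q := by
  induction h with
  | refl => exact fun x hx => hx
  | tail _ hstep ih => exact fun x hx => mergeStep_chain_subset hstep x (ih x hx)

end Aux6

section Aux7
variable {G : Type*} [Group G] {X : Set G} {g : G}

lemma factLE_of_chain_subset' :
    ∀ (n : ℕ) (q p : G × List G × G), q.2.1.length ≤ n →
      IsLinFact X g q → IsLinFact X g p →
      (∀ x ∈ chainOf p, x ∈ chainOf q) → FactLE p q := by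
  intro n
  induction n with
  | zero =>
    intro q p hn hq hp hsub
    have hqsub : ∀ x ∈ chainOf q, x ∈ chainOf p := by
      intro x hxq
      obtain ⟨i, hi, hxe⟩ := mem_chainOf.mp hxq
      have hnil : q.2.1 = [] := List.length_eq_zero_iff.mp (Nat.le_zero.mp hn)
      have hp1 := hsub p.1 mem_chainOf_self
      obtain ⟨i0, hi0, he0⟩ := mem_chainOf.mp hp1
      have hx1 : x = p.1 := by rw [hxe, he0, hnil]; simp
      rw [hx1]; exact mem_chainOf_self
    have : chainOf p = chainOf q := Finset.ext fun x => ⟨fun h => hsub x h, fun h => hqsub x h⟩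
    rw [chainOf_inj hp hq this]
    exact Relation.ReflTransGen.refl
  | succ n ih =>
    intro q p hn hq hp hsub
    by_cases heq : ∀ x ∈ chainOf q, x ∈ chainOf p
    · have : chainOf p = chainOf q := Finset.ext fun x => ⟨fun h => hsub x h, fun h => heq x h⟩
      rw [chainOf_inj hp hq this]
      exact Relation.ReflTransGen.refl
    · push_neg at heq
      obtain ⟨h₀, h₀q, h₀p⟩ := heq
      obtain ⟨xL, l, xR⟩ := q
      obtain ⟨j, hj, h₀e⟩ := mem_chainOf.mp h₀q
      simp only at hj h₀e hn
      subst h₀e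
      cases l with
      | nil =>
        exfalso
        apply h₀p
        have hp1 := hsub p.1 mem_chainOf_self
        obtain ⟨i0, hi0, he0⟩ := mem_chainOf.mp hp1
        simp only at he0
        have : (xL : G) * (List.take j ([] : List G)).prod = p.1 := by rw [he0]; simp
        show (xL, ([] : List G), xR).1 * ((xL, ([] : List G), xR).2.1.take j).prod ∈ chainOf p
        simp only
        rw [this]
        exact mem_chainOf_self
      | cons a t =>
        simp only [List.length_cons] at hj hn
        rcases Nat.lt_or_ge j 1 with hj0 | hj1
        · -- j = 0 : merge into the left entry
          have hj' : j = 0 := by omega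
          subst hj'
          have hq' := linfact_merge_left (X := X) (g := g) hq
          have hstep : MergeStep (xL * a, t, xR) (xL, a :: t, xR) := MergeStep.left xL a t xR
          have hsub' : ∀ x ∈ chainOf p, x ∈ chainOf (xL * a, t, xR) := by
            intro x hx
            obtain ⟨i, hi, he⟩ := mem_chainOf.mp (hsub x hx)
            simp only at hi he
            have hi0 : i ≠ 0 := by
              rintro rfl
              apply h₀p
              show (xL, a :: t, xR).1 * ((xL, a :: t, xR).2.1.take 0).prod ∈ chainOf p
              simp only
              rw [← he]; exact hx
            obtain ⟨i', rfl⟩ : ∃ i', i = i' + 1 := ⟨i - 1, by omega⟩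
            refine mem_chainOf.mpr ⟨i', ?_, ?_⟩
            · show i' ≤ t.length
              simp only [List.length_cons] at hi; omega
            · show x = (xL * a) * (t.take i').prod
              rw [he, List.take_succ_cons, List.prod_cons, ← mul_assoc]
          exact Relation.ReflTransGen.tail
            (ih (xL * a, t, xR) p (by simp only; omega) hq' hp hsub') hstep
        rcases Nat.lt_or_ge j (t.length + 1) with hjlt | hjge
        · -- 1 ≤ j < length : merge in the middle
          obtain ⟨j', rfl⟩ : ∃ j', j = j' + 1 := ⟨j - 1, by omega⟩
          have hj'1 : j' < (a :: t).length := by simp only [List.length_cons]; omega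
          have hj'2 : j' + 1 < (a :: t).length := by simp only [List.length_cons]; omega
          set l : List G := a :: t with hldef
          set L1 : List G := l.take j' with hL1def
          set A : G := l[j']'hj'1 with hAdef
          set B : G := l[j'+1]'hj'2 with hBdef
          set L2 : List G := l.drop (j'+1+1) with hL2def
          have hdec : L1 ++ A :: B :: L2 = l := by
            rw [hAdef, hBdef, hL2def, hL1def,
              ← List.drop_eq_getElem_cons hj'2, ← List.drop_eq_getElem_cons hj'1,
              List.take_append_drop]
          have hL1len : L1.length = j' := by
            rw [hL1def, List.length_take]
            omega
          have hL2len : L2.length = l.length - (j' + 2) := by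
            rw [hL2def, List.length_drop]
          have hq2 : IsLinFact X g (xL, L1 ++ A :: B :: L2, xR) := by rw [hdec]; exact hq
          have hq' := linfact_merge_mid (X := X) (g := g) hq2
          have hstep : MergeStep (xL, L1 ++ (A * B) :: L2, xR) (xL, L1 ++ A :: B :: L2, xR) :=
            MergeStep.mid xL L1 A B L2 xR
          have hsub' : ∀ x ∈ chainOf p, x ∈ chainOf (xL, L1 ++ (A * B) :: L2, xR) := by
            intro x hx
            obtain ⟨i, hi, he⟩ := mem_chainOf.mp (hsub x hx)
            simp only at hi he
            have hij : i ≠ j' + 1 := by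
              rintro rfl
              apply h₀p
              show (xL, l, xR).1 * ((xL, l, xR).2.1.take (j'+1)).prod ∈ chainOf p
              simp only
              rw [← he]; exact hx
            rcases Nat.lt_or_ge i (j' + 1) with hilt | hige
            · -- i ≤ j'
              refine mem_chainOf.mpr ⟨i, ?_, ?_⟩
              · show i ≤ (L1 ++ (A * B) :: L2).length
                simp only [List.length_append, List.length_cons]; omega
              · show x = xL * ((L1 ++ (A * B) :: L2).take i).prod
                have hti : (L1 ++ (A * B) :: L2).take i = l.take i := by
                  rw [List.take_append_of_le_length (by omega), hL1def, List.take_take,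
                    min_eq_left (by omega)]
                rw [hti]; exact he
            · -- i ≥ j' + 2
              have hige2 : j' + 2 ≤ i := by omega
              set r : ℕ := i - (j' + 2) with hrdef
              have hir : i = L1.length + 1 + (r + 1) := by omega
              have hrle : r ≤ L2.length := by
                rw [hL2len]
                simp only [hldef, List.length_cons] at hi ⊢
                omega
              refine mem_chainOf.mpr ⟨L1.length + 1 + r, ?_, ?_⟩
              · show L1.length + 1 + r ≤ (L1 ++ (A * B) :: L2).length
                simp only [List.length_append, List.length_cons]; omega
              · show x = xL * ((L1 ++ (A * B) :: L2).take (L1.length + 1 + r)).prod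
                rw [take_prod_append_cons]
                have hxe2 : x = xL * (L1.prod * A * (B * (L2.take r).prod)) := by
                  rw [he, show l.take i = ((L1 ++ A :: B :: L2).take i) from by rw [hdec],
                    hir, take_prod_append_cons, List.take_succ_cons, List.prod_cons]
                rw [hxe2]
                simp [mul_assoc]
          have hlen' : (L1 ++ (A * B) :: L2).length ≤ n := by
            simp only [List.length_append, List.length_cons]
            simp only [hldef, List.length_cons] at hL2len
            omega
          have hfle := Relation.ReflTransGen.tail
            (ih (xL, L1 ++ (A * B) :: L2, xR) p hlen' hq' hp hsub') hstep
          rw [hdec] at hfle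
          exact hfle
        · -- j = length : merge into the right entry
          have hje : j = t.length + 1 := by omega
          rcases List.eq_nil_or_concat (a :: t) with hcon | ⟨t', b, hconc⟩
          · simp at hcon
          · rw [List.concat_eq_append] at hconc
            have hq2 : IsLinFact X g (xL, t' ++ [b], xR) := by rw [← hconc]; exact hq
            have hq' := linfact_merge_right (X := X) (g := g) hq2
            have hstep : MergeStep (xL, t', b * xR) (xL, t' ++ [b], xR) :=
              MergeStep.right xL t' b xR
            have ht'len : t'.length = t.length := by
              have := congrArg List.length hconc
              simp only [List.length_cons, List.length_append, List.length_cons,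
                List.length_nil] at this
              omega
            have hsub' : ∀ x ∈ chainOf p, x ∈ chainOf (xL, t', b * xR) := by
              intro x hx
              obtain ⟨i, hi, he⟩ := mem_chainOf.mp (hsub x hx)
              simp only at hi he
              have hij : i ≠ j := by
                rintro rfl
                apply h₀p
                show (xL, a :: t, xR).1 * ((xL, a :: t, xR).2.1.take i).prod ∈ chainOf p
                simp only
                rw [← he]; exact hx
              simp only [List.length_cons] at hi
              have hit : i ≤ t'.length := by omega
              refine mem_chainOf.mpr ⟨i, hit, ?_⟩
              show x = xL * (t'.take i).prod
              rw [he, hconc, List.take_append_of_le_length hit]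
            have hfle := Relation.ReflTransGen.tail
              (ih (xL, t', b * xR) p (by simp only; omega) hq' hp hsub') hstep
            rw [← hconc] at hfle
            exact hfle

end Aux7

section Aux8
variable {G : Type*} [Group G] {X : Set G} {g : G}

lemma exists_intLe_min (c : Finset G) (hne : c.Nonempty)
    (hcl : ∀ h ∈ c, h ∈ Submonoid.closure X)
    (hcomp : (c : Set G).Pairwise fun a b => intLe X a b ∨ intLe X b a) :
    ∃ b ∈ c, ∀ a ∈ c, intLe X b a := by
  obtain ⟨b, hb, hmin⟩ := Finset.exists_min_image c (wlen X) hne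
  refine ⟨b, hb, fun a ha => ?_⟩
  by_cases hab : b = a
  · subst hab; exact intLe_refl (hcl _ hb)
  · rcases hcomp (Finset.mem_coe.mpr hb) (Finset.mem_coe.mpr ha) hab with h | h
    · exact h
    · have h1 := hmin a ha
      have h2 := intLe_wlen_lt h (Ne.symm hab)
      exact absurd h2 (by omega)

lemma exists_enum : ∀ (N : ℕ) (c : Finset G), c.card = N + 1 →
    (∀ h ∈ c, h ∈ Submonoid.closure X) →
    ((c : Set G).Pairwise fun a b => intLe X a b ∨ intLe X b a) →
    ∃ (k : ℕ) (y : Fin (k + 1) → G),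
      (∀ i j : Fin (k + 1), i < j → intLe X (y i) (y j) ∧ y i ≠ y j) ∧
        Set.range y = (c : Set G) := by
  classical
  intro N
  induction N with
  | zero =>
    intro c hc hcl hcomp
    obtain ⟨a, rfl⟩ := Finset.card_eq_one.mp hc
    refine ⟨0, fun _ => a, fun i j hij => ?_, by simp⟩
    exfalso
    have hij' : (i : ℕ) < (j : ℕ) := hij
    have hi := i.isLt
    have hj := j.isLt
    omega
  | succ N ih =>
    intro c hc hcl hcomp
    have hne : c.Nonempty := Finset.card_pos.mp (by omega)
    obtain ⟨b, hb, hmin⟩ := exists_intLe_min c hne hcl hcomp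
    have hc' : (c.erase b).card = N + 1 := by rw [Finset.card_erase_of_mem hb, hc]; omega
    have hsubset : ((c.erase b : Finset G) : Set G) ⊆ (c : Set G) :=
      Finset.coe_subset.mpr (Finset.erase_subset b c)
    obtain ⟨k, y', hy', hr'⟩ := ih (c.erase b) hc'
      (fun h hh => hcl h (Finset.mem_of_mem_erase hh)) (hcomp.mono hsubset)
    refine ⟨k + 1, Fin.cons b y', ?_, ?_⟩
    · intro i j hij
      have hj0 : j ≠ 0 := by
        rintro rfl
        exact absurd hij (Fin.not_lt_zero i)
      obtain ⟨j', rfl⟩ := Fin.eq_succ_of_ne_zero hj0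
      rw [Fin.cons_succ]
      have hyj' : y' j' ∈ c.erase b := by
        rw [← Finset.mem_coe, ← hr']; exact ⟨j', rfl⟩
      rcases Fin.eq_zero_or_eq_succ i with rfl | ⟨i', rfl⟩
      · rw [Fin.cons_zero]
        refine ⟨hmin _ (Finset.mem_of_mem_erase hyj'), ?_⟩
        exact fun hbe => (Finset.ne_of_mem_erase hyj') hbe.symm
      · rw [Fin.cons_succ]
        exact hy' i' j' (by exact Fin.succ_lt_succ_iff.mp hij)
    · rw [Fin.range_cons, hr', Finset.coe_erase, Set.insert_diff_singleton]
      exact Set.insert_eq_self.mpr (Finset.mem_coe.mpr hb)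

end Aux8


/-- `f = chainOf` is an order isomorphism from `Fact(G,g,I)` onto the poset of
nonempty chains of `[1,g]` ordered by inclusion; its inverse sends the chain
`y₀ < y₁ < ⋯ < y_k` to the linear factorization `(y₀, y₀⁻¹y₁, …, y_{k-1}⁻¹y_k, y_k⁻¹g)`. -/
theorem stmt1 {G : Type*} [Group G] (X : Set G)
    (hX : ∀ g x, x ∈ X → g * x * g⁻¹ ∈ X)
    (g : G) (hg : g ∈ Submonoid.closure X) :
    -- `f` lands in nonempty chains of `[1,g]`
    (∀ p, IsLinFact X g p → (chainOf p).Nonempty ∧ (∀ h ∈ chainOf p, intLe X h g) ∧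
      (chainOf p : Set G).Pairwise (fun a b => intLe X a b ∨ intLe X b a)) ∧
    -- `f` is order-preserving and order-reflecting
    (∀ p q, IsLinFact X g p → IsLinFact X g q →
      (FactLE p q ↔ (chainOf p : Set G) ⊆ (chainOf q : Set G))) ∧
    -- `f` is injective
    (∀ p q, IsLinFact X g p → IsLinFact X g q → chainOf p = chainOf q → p = q) ∧
    -- `f` is surjective onto nonempty chains of `[1,g]`
    (∀ c : Finset G, c.Nonempty → (∀ h ∈ c, intLe X h g) →
      (c : Set G).Pairwise (fun a b => intLe X a b ∨ intLe X b a) →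
      ∃ p, IsLinFact X g p ∧ chainOf p = c) ∧
    -- the inverse formula: the chain `y₀ < y₁ < ⋯ < y_k` in `[1,g]` comes from the
    -- linear factorization `(y₀, y₀⁻¹y₁, …, y_{k-1}⁻¹y_k, y_k⁻¹g)`
    (∀ (k : ℕ) (y : Fin (k + 1) → G),
      (∀ i j : Fin (k + 1), i < j → intLe X (y i) (y j) ∧ y i ≠ y j) →
      (∀ i, intLe X (y i) g) →
      IsLinFact X g
        (y 0, List.ofFn (fun i : Fin k => (y i.castSucc)⁻¹ * y i.succ), (y (Fin.last k))⁻¹ * g) ∧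
      (chainOf (y 0, List.ofFn (fun i : Fin k => (y i.castSucc)⁻¹ * y i.succ),
        (y (Fin.last k))⁻¹ * g) : Set G) = Set.range y) := by
  refine ⟨?_, ?_, ?_, ?_, ?_⟩
  · -- part 1
    intro p hp
    obtain ⟨xL, l, xR⟩ := p
    refine ⟨⟨_, mem_chainOf_self⟩, ?_, ?_⟩
    · intro h hh
      obtain ⟨i, hi, rfl⟩ := mem_chainOf.mp hh
      exact linfact_tuple_le_g hp ⟨i, Nat.lt_succ_of_le hi⟩
    · rintro a ha b hb hne
      obtain ⟨i, hi, rfl⟩ := mem_chainOf.mp (Finset.mem_coe.mp ha)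
      obtain ⟨j, hj, rfl⟩ := mem_chainOf.mp (Finset.mem_coe.mp hb)
      rcases lt_trichotomy i j with hij | hij | hij
      · exact Or.inl (linfact_tuple_strict hp ⟨i, Nat.lt_succ_of_le hi⟩
          ⟨j, Nat.lt_succ_of_le hj⟩ (Fin.mk_lt_mk.mpr hij)).1
      · exact absurd (by rw [hij]) hne
      · exact Or.inr (linfact_tuple_strict hp ⟨j, Nat.lt_succ_of_le hj⟩
          ⟨i, Nat.lt_succ_of_le hi⟩ (Fin.mk_lt_mk.mpr hij)).1
  · -- part 2
    intro p q hp hq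
    constructor
    · intro h x hx
      exact Finset.mem_coe.mpr (factLE_chain_subset h x (Finset.mem_coe.mp hx))
    · intro h
      exact factLE_of_chain_subset' q.2.1.length q p le_rfl hq hp
        (fun x hx => Finset.mem_coe.mp (h (Finset.mem_coe.mpr hx)))
  · -- part 3
    intro p q hp hq h
    exact chainOf_inj hp hq h
  · -- part 4
    intro c hne hint hcomp
    have hcl : ∀ h ∈ c, h ∈ Submonoid.closure X := fun h hh => (hint h hh).1
    have hcard : c.card = (c.card - 1) + 1 := by
      have := Finset.card_pos.mpr hne; omega
    obtain ⟨k, y, hy, hr⟩ := exists_enum (c.card - 1) c hcard hcl hcomp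
    have hyg : ∀ i, intLe X (y i) g := fun i =>
      hint (y i) (by rw [← Finset.mem_coe, ← hr]; exact ⟨i, rfl⟩)
    refine ⟨(y 0, TupleAux.mid y, (y (Fin.last k))⁻¹ * g),
      TupleAux.inv_isLinFact hy hyg, ?_⟩
    apply Finset.coe_injective
    rw [TupleAux.inv_chain hy, hr]
  · -- part 5
    intro k y hy hyg
    exact ⟨TupleAux.inv_isLinFact hy hyg, TupleAux.inv_chain hy⟩
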